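/- Let z_1, ..., z_n be the complex roots (with multiplicity) of a monic polynomial x^n + c_{n-1} x^{n-1} + ... + c_0, ordered so that |z_1| ≥ ... ≥ |z_n|, and suppose |z_i| ≥ 1 exactly for i ≤ r and |z_i| < 1 for i > r, with B := max{1, max_i |c_i|}. Then the product of the r largest roots satisfies |z_1 · ... · z_r| ≤ 3 B n^r. -/

import Mathlib

open Polynomial Finset

noncomputable section

lemma geom_unit (w : ℂ) :
    ((1 - Polynomial.C w * Polynomial.X : Polynomial ℂ) : PowerSeries ℂ) *
      PowerSeries.mk (fun m => w ^ m) = 1 := by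
  have : ((1 - Polynomial.C w * Polynomial.X : Polynomial ℂ) : PowerSeries ℂ)
      = 1 - PowerSeries.C w * PowerSeries.X := by
    rw [Polynomial.coe_sub, Polynomial.coe_one, Polynomial.coe_mul, Polynomial.coe_C,
      Polynomial.coe_X]
  rw [this, sub_mul, one_mul, mul_assoc]
  ext k
  cases k with
  | zero => simp [PowerSeries.coeff_mk]
  | succ k =>
      simp [PowerSeries.coeff_mk, PowerSeries.coeff_succ_X_mul, PowerSeries.coeff_one,
        pow_succ, mul_comm]

lemma reflect_linear (w : ℂ) :
    (Polynomial.X - Polynomial.C w).reflect 1 = 1 - Polynomial.C w * Polynomial.X := by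
  ext i
  rw [Polynomial.coeff_reflect]
  match i with
  | 0 => simp [Polynomial.revAt_le]
  | 1 => simp [Polynomial.revAt_le, Polynomial.coeff_one]
  | (k+2) =>
    rw [Polynomial.revAt_eq_self_of_lt (by omega)]
    simp [Polynomial.coeff_X, Polynomial.coeff_one]

end
noncomputable section

lemma reflect_prod (z : ℕ → ℂ) (m : ℕ) :
    (∏ i ∈ range m, (Polynomial.X - Polynomial.C (z i))).reflect m
      = ∏ i ∈ range m, (1 - Polynomial.C (z i) * Polynomial.X) := by
  induction m with
  | zero => simp
  | succ m ih =>
      rw [prod_range_succ, prod_range_succ,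
        Polynomial.reflect_mul _ _ ?hf (Polynomial.natDegree_X_sub_C _).le, ih,
        reflect_linear]
      case hf =>
        refine le_trans (Polynomial.natDegree_prod_le _ _) ?_
        simp [Polynomial.natDegree_X_sub_C]

lemma nat_geom (c m : ℕ) : ∑ j ∈ range (m + 1), c ^ j ≤ (c + 1) ^ m := by
  induction m with
  | zero => simp
  | succ m ih =>
      rw [sum_range_succ]
      have h1 : c ^ (m + 1) ≤ (c + 1) ^ m * c := by
        rw [pow_succ]
        exact Nat.mul_le_mul_right c (Nat.pow_le_pow_left (by omega) m)
      have h2 : (c + 1) ^ (m + 1) = (c + 1) ^ m * c + (c + 1) ^ m := by ring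
      omega

lemma geom_coeff_bound (z : ℕ → ℂ) (s : Finset ℕ) (hz : ∀ i ∈ s, ‖z i‖ ≤ 1) (m : ℕ) :
    ‖(PowerSeries.coeff m) (∏ i ∈ s, PowerSeries.mk (fun k => z i ^ k))‖
      ≤ (s.card : ℝ) ^ m := by
  induction s using Finset.induction generalizing m with
  | empty =>
      cases m with
      | zero => simp
      | succ m => simp [PowerSeries.coeff_one]
  | @insert a s ha ih =>
      rw [Finset.prod_insert ha, PowerSeries.coeff_mul]
      refine le_trans (norm_sum_le _ _) ?_
      have hterm : ∀ q ∈ Finset.HasAntidiagonal.antidiagonal m,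
          ‖(PowerSeries.coeff q.1) (PowerSeries.mk fun k => z a ^ k) *
            (PowerSeries.coeff q.2) (∏ i ∈ s, PowerSeries.mk (fun k => z i ^ k))‖
          ≤ (s.card : ℝ) ^ q.2 := by
        intro q hq
        rw [norm_mul, PowerSeries.coeff_mk, norm_pow]
        have hza : ‖z a‖ ≤ 1 := hz a (Finset.mem_insert_self a s)
        calc ‖z a‖ ^ q.1 * ‖_‖ ≤ 1 * ((s.card : ℝ) ^ q.2) := by
              apply mul_le_mul (pow_le_one₀ (norm_nonneg _) hza)
                (ih (fun i hi => hz i (Finset.mem_insert_of_mem hi)) q.2) (norm_nonneg _)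
                zero_le_one
          _ = (s.card : ℝ) ^ q.2 := one_mul _
      refine le_trans (Finset.sum_le_sum hterm) ?_
      rw [Finset.Nat.sum_antidiagonal_eq_sum_range_succ_mk]
      rw [Finset.card_insert_of_notMem ha]
      push_cast
      have : ∑ k ∈ range (m + 1), ((s.card : ℝ)) ^ (m - k)
          = ∑ j ∈ range (m + 1), ((s.card : ℝ)) ^ j := by
        rw [← Finset.sum_range_reflect]
        apply Finset.sum_congr rfl
        intro x hx
        rw [Finset.mem_range] at hx
        congr 1
        omega
      rw [this]
      have := nat_geom s.card m
      calc (∑ j ∈ range (m + 1), ((s.card : ℝ)) ^ j)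
          = ((∑ j ∈ range (m + 1), s.card ^ j : ℕ) : ℝ) := by push_cast; ring_nf
        _ ≤ (((s.card + 1) ^ m : ℕ) : ℝ) := by exact_mod_cast this
        _ = ((s.card : ℝ) + 1) ^ m := by push_cast; ring

end
lemma sum_pow_le2 (n : ℕ) (h : 2 ≤ n) : ∀ r, ∑ j ∈ Finset.range (r + 1), n ^ j ≤ 2 * n ^ r := by
  intro r
  induction r with
  | zero => simp
  | succ r ih =>
      rw [Finset.sum_range_succ]
      have h1 : 2 * n ^ r ≤ n ^ (r + 1) := by
        calc 2 * n ^ r = n ^ r * 2 := by ring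
          _ ≤ n ^ r * n := Nat.mul_le_mul_left _ h
          _ = n ^ (r + 1) := by rw [pow_succ]
      omega

lemma sum_pow_le (n r : ℕ) (hr : 1 ≤ r) (hrn : r ≤ n) :
    ∑ j ∈ Finset.range (r + 1), n ^ j ≤ 2 * n ^ r := by
  rcases Nat.lt_or_ge n 2 with h | h
  · have hn1 : n = 1 := by omega
    have hr1 : r = 1 := by omega
    subst hn1; subst hr1
    simp
  · exact sum_pow_le2 n h r


/-- For a monic complex polynomial of degree `n ≥ 1` with roots `z_1, …, z_n`
ordered by decreasing modulus, where exactly the first `r` roots have modulus `≥ 1`,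
the product of the `r` largest roots is bounded by `3 B n^r`,
with `B = max{1, max_i |c_i|}` over the non-leading coefficients. -/
theorem stmt_3 (n r : ℕ) (hn : 1 ≤ n) (z : ℕ → ℂ)
    (p : Polynomial ℂ)
    (hp : p = ∏ i ∈ Finset.range n, (Polynomial.X - Polynomial.C (z i)))
    (hmono : ∀ i j, i ≤ j → j < n → ‖z j‖ ≤ ‖z i‖)
    (hr1 : 1 ≤ r) (hrn : r ≤ n)
    (hr : ∀ i < n, (1 ≤ ‖z i‖ ↔ i < r)) :
    ‖∏ i ∈ Finset.range r, z i‖ ≤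
      3 * (max 1 ((Finset.range n).sup' (Finset.nonempty_range_iff.mpr (by omega))
        (fun i => ‖p.coeff i‖))) * (n : ℝ) ^ r := by
  classical
  set B : ℝ := max 1 ((Finset.range n).sup' (Finset.nonempty_range_iff.mpr (by omega))
        (fun i => ‖p.coeff i‖)) with hB
  have hB1 : (1 : ℝ) ≤ B := le_max_left _ _
  -- small roots
  have hzsmall : ∀ i ∈ Finset.Ico r n, ‖z i‖ ≤ 1 := by
    intro i hi
    rw [Finset.mem_Ico] at hi
    by_contra h
    push_neg at h
    have := (hr i hi.2).mp h.le
    omega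
  set G : PowerSeries ℂ := ∏ i ∈ Finset.Ico r n, PowerSeries.mk (fun k => z i ^ k) with hG
  -- cast of products
  have hcast : ∀ (t : Finset ℕ),
      ((∏ i ∈ t, (1 - Polynomial.C (z i) * Polynomial.X) : Polynomial ℂ) : PowerSeries ℂ)
        = ∏ i ∈ t, ((1 - Polynomial.C (z i) * Polynomial.X : Polynomial ℂ) : PowerSeries ℂ) := by
    intro t
    rw [← Polynomial.coeToPowerSeries.ringHom_apply, map_prod]
    simp [Polynomial.coeToPowerSeries.ringHom_apply]
  -- key identity
  have key : ((∏ i ∈ Finset.range r, (1 - Polynomial.C (z i) * Polynomial.X) : Polynomial ℂ) :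
        PowerSeries ℂ)
      = ((p.reflect n : Polynomial ℂ) : PowerSeries ℂ) * G := by
    rw [hp, reflect_prod,
      ← Finset.prod_range_mul_prod_Ico (fun i => (1 - Polynomial.C (z i) * Polynomial.X)) hrn]
    rw [Polynomial.coe_mul, hcast, hcast, hG, mul_assoc, ← Finset.prod_mul_distrib]
    rw [Finset.prod_congr rfl (fun i _ => geom_unit (z i)), Finset.prod_const_one, mul_one]
  -- coefficient of A at r
  have hA : (∏ i ∈ Finset.range r, (1 - Polynomial.C (z i) * Polynomial.X)).coeff r
      = ∏ i ∈ Finset.range r, (-(z i)) := by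
    rw [← reflect_prod z r, Polynomial.coeff_reflect, Polynomial.revAt_le (le_refl r),
      Nat.sub_self, Polynomial.coeff_zero_eq_eval_zero, Polynomial.eval_prod]
    simp
  -- p monic of degree n
  have hpm : p.Monic := by
    rw [hp]
    exact Polynomial.monic_prod_of_monic _ _ (fun i _ => Polynomial.monic_X_sub_C (z i))
  have hdeg : p.natDegree = n := by
    rw [hp, Polynomial.natDegree_prod _ _ (fun i _ => Polynomial.X_sub_C_ne_zero (z i))]
    simp [Polynomial.natDegree_X_sub_C]
  have hcoeffn : p.coeff n = 1 := by
    have := hpm.leadingCoeff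
    rwa [Polynomial.leadingCoeff, hdeg] at this
  -- coefficients of reflect n p are bounded by B
  have hQcoeff : ∀ a : ℕ, a ≤ r → ‖(p.reflect n).coeff a‖ ≤ B := by
    intro a ha
    rw [Polynomial.coeff_reflect, Polynomial.revAt_le (le_trans ha hrn)]
    rcases Nat.eq_zero_or_pos a with rfl | hpos
    · rw [Nat.sub_zero, hcoeffn]
      simpa using hB1
    · have hmem : n - a ∈ Finset.range n := Finset.mem_range.mpr (by omega)
      exact le_trans (Finset.le_sup' (fun i => ‖p.coeff i‖) hmem) (le_max_right _ _)
  -- bound the geometric factor coefficients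
  have hGcoeff : ∀ b : ℕ, ‖(PowerSeries.coeff b) G‖ ≤ (n : ℝ) ^ b := by
    intro b
    refine le_trans (geom_coeff_bound z _ hzsmall b) ?_
    apply pow_le_pow_left₀ (by positivity)
    rw [Nat.card_Ico]
    exact_mod_cast Nat.sub_le n r
  -- main estimate
  have hmain : ‖∏ i ∈ Finset.range r, z i‖
      ≤ ∑ q ∈ Finset.HasAntidiagonal.antidiagonal r, B * (n : ℝ) ^ q.2 := by
    have h1 : ‖∏ i ∈ Finset.range r, z i‖
        = ‖(PowerSeries.coeff r) (((∏ i ∈ Finset.range r,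
            (1 - Polynomial.C (z i) * Polynomial.X) : Polynomial ℂ) : PowerSeries ℂ))‖ := by
      rw [Polynomial.coeff_coe, hA, norm_prod, norm_prod]
      exact Finset.prod_congr rfl (fun i _ => (norm_neg _).symm)
    rw [h1, key, PowerSeries.coeff_mul]
    refine le_trans (norm_sum_le _ _) (Finset.sum_le_sum ?_)
    intro q hq
    rw [Finset.HasAntidiagonal.mem_antidiagonal] at hq
    rw [norm_mul, Polynomial.coeff_coe]
    exact mul_le_mul (hQcoeff q.1 (by omega)) (hGcoeff q.2) (norm_nonneg _)
      (le_trans zero_le_one hB1)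
  -- sum up
  have hsum : ∑ q ∈ Finset.HasAntidiagonal.antidiagonal r, B * (n : ℝ) ^ q.2 ≤ B * (2 * (n : ℝ) ^ r) := by
    rw [Finset.Nat.sum_antidiagonal_eq_sum_range_succ_mk]
    have h2 : ∑ k ∈ Finset.range (r + 1), B * (n : ℝ) ^ (r - k)
        = B * ∑ j ∈ Finset.range (r + 1), (n : ℝ) ^ j := by
      rw [Finset.mul_sum, ← Finset.sum_range_reflect]
      apply Finset.sum_congr rfl
      intro x hx
      rw [Finset.mem_range] at hx
      congr 2
      omega
    rw [h2]
    have h3 : ∑ j ∈ Finset.range (r + 1), (n : ℝ) ^ j ≤ 2 * (n : ℝ) ^ r := by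
      have := sum_pow_le n r hr1 hrn
      calc ∑ j ∈ Finset.range (r + 1), (n : ℝ) ^ j
          = ((∑ j ∈ Finset.range (r + 1), n ^ j : ℕ) : ℝ) := by push_cast; ring_nf
        _ ≤ ((2 * n ^ r : ℕ) : ℝ) := by exact_mod_cast this
        _ = 2 * (n : ℝ) ^ r := by push_cast; ring
    exact mul_le_mul_of_nonneg_left h3 (le_trans zero_le_one hB1)
  have hfin : B * (2 * (n : ℝ) ^ r) ≤ 3 * B * (n : ℝ) ^ r := by
    have hnr : (0 : ℝ) ≤ (n : ℝ) ^ r := by positivity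
    nlinarith [le_trans zero_le_one hB1]
  exact le_trans hmain (le_trans hsum hfin)
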